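/- If G has a Kempe-coloring of size k, then G has at least (k−1)·|V(G)| − C(k,2) edges, with equality if and only if any two distinct color classes induce a tree. -/

import Mathlib

open SimpleGraph

/-- `A` is an anticlique (independent set) of `G`. -/
def IsAnticlique {V : Type*} (G : SimpleGraph V) (A : Finset V) : Prop :=
  ∀ x ∈ A, ∀ y ∈ A, ¬ G.Adj x y

/-- A coloring of `G`: a partition of the vertex set into nonempty anticliques. -/
def IsColoring {V : Type*} (G : SimpleGraph V) (c : Finset (Finset V)) : Prop :=
  (∀ A ∈ c, A.Nonempty) ∧
  (∀ A ∈ c, ∀ B ∈ c, A ≠ B → Disjoint A B) ∧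
  (∀ v : V, ∃ A ∈ c, v ∈ A) ∧
  (∀ A ∈ c, IsAnticlique G A)

/-- `A` induces a connected subgraph of `G`. -/
def ConnSet {V : Type*} (G : SimpleGraph V) (A : Finset V) : Prop :=
  (G.induce (↑A : Set V)).Connected

/-- A Kempe-coloring: any two distinct classes induce a connected subgraph. -/
def IsKempe {V : Type*} [DecidableEq V] (G : SimpleGraph V) (c : Finset (Finset V)) : Prop :=
  IsColoring G c ∧ ∀ A ∈ c, ∀ B ∈ c, A ≠ B → ConnSet G (A ∪ B)

/-- Two vertex sets are adjacent if some edge joins them. -/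
def SetsAdj {V : Type*} (G : SimpleGraph V) (A B : Finset V) : Prop :=
  ∃ a ∈ A, ∃ b ∈ B, G.Adj a b

/-- A clique minor: pairwise disjoint, pairwise adjacent, nonempty connected subsets. -/
def IsCliqueMinor {V : Type*} (G : SimpleGraph V) (K : Finset (Finset V)) : Prop :=
  (∀ A ∈ K, A.Nonempty) ∧ (∀ A ∈ K, ConnSet G A) ∧
  (∀ A ∈ K, ∀ B ∈ K, A ≠ B → Disjoint A B ∧ SetsAdj G A B)

/-- A shallow clique minor: a clique minor all of whose branch sets have size 1 or 2. -/
def IsShallowCliqueMinor {V : Type*} (G : SimpleGraph V) (K : Finset (Finset V)) : Prop :=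
  IsCliqueMinor G K ∧ ∀ A ∈ K, A.card ≤ 2

/-- `T` is a transversal of the family `K`: it meets each member in exactly one vertex. -/
def Traversed {V : Type*} [DecidableEq V] (T : Finset V) (K : Finset (Finset V)) : Prop :=
  ∀ A ∈ K, (T ∩ A).card = 1

/-- `c` is a coloring of `G` of minimum size, i.e. of size `χ(G)`. -/
def MinColoring {V : Type*} (G : SimpleGraph V) (c : Finset (Finset V)) : Prop :=
  IsColoring G c ∧ ∀ d, IsColoring G d → c.card ≤ d.card

/-- `G` has no antitriangle (independent set of size 3). -/
def HasNoAntitriangle {V : Type*} (G : SimpleGraph V) : Prop :=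
  ¬ ∃ A : Finset V, A.card = 3 ∧ IsAnticlique G A

lemma connected_bound' {W : Type*} [Fintype W] : ∀ (n : ℕ) (G : SimpleGraph W)
    [Fintype G.edgeSet], G.edgeFinset.card = n → G.Connected →
    Fintype.card W ≤ n + 1 ∧ (Fintype.card W = n + 1 → G.IsAcyclic) := by
  intro n
  induction n using Nat.strong_induction_on with
  | _ n ih =>
  intro G _ hn hconn
  classical
  by_cases hac : G.IsAcyclic
  · have ht : G.IsTree := ⟨hconn, hac⟩
    have hc := ht.card_edgeFinset
    constructor
    · omega
    · exact fun _ => hac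
  · rw [IsAcyclic] at hac
    push_neg at hac
    obtain ⟨v, cyc, hcyc⟩ := hac
    have hlen := hcyc.three_le_length
    have hedges : cyc.edges ≠ [] := by
      intro h
      have := cyc.length_edges
      rw [h] at this
      simp at this
      omega
    obtain ⟨e, he⟩ := List.exists_mem_of_ne_nil _ hedges
    revert he
    induction e using Sym2.ind with
    | _ x y =>
    intro he
    have hadj : G.Adj x y := cyc.adj_of_mem_edges he
    set G' := G \ fromEdgeSet {s(x,y)} with hG'
    have hreach : ∀ a b : W, G.Adj a b → G'.Reachable a b := by
      intro a b hab
      by_cases hxy : s(a, b) = s(x, y)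
      · have hr : G'.Reachable x y :=
          (adj_and_reachable_delete_edges_iff_exists_cycle.mpr ⟨v, cyc, hcyc, he⟩).2
        rw [Sym2.eq_iff] at hxy
        rcases hxy with ⟨rfl, rfl⟩ | ⟨rfl, rfl⟩
        · exact hr
        · exact hr.symm
      · exact Adj.reachable (by simp [hG', sdiff_adj, fromEdgeSet_adj, hxy, hab])
    have hG'conn : G'.Connected := by
      haveI : Nonempty W := hconn.nonempty
      refine Connected.mk fun a b => ?_
      obtain ⟨p⟩ := hconn.preconnected a b
      induction p with
      | nil => exact Reachable.refl _
      | cons h p ihp => exact (hreach _ _ h).trans ihp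
    have hG'edge : G'.edgeFinset = G.edgeFinset.erase s(x, y) := by
      ext e'
      simp only [mem_edgeFinset, Finset.mem_erase, hG', edgeSet_sdiff, edgeSet_fromEdgeSet,
        edgeSet_sdiff_sdiff_isDiag, Set.mem_diff, Set.mem_singleton_iff]
      tauto
    have hxymem : s(x, y) ∈ G.edgeFinset := by
      rw [mem_edgeFinset]; exact hadj
    have hcard' : G'.edgeFinset.card = n - 1 := by
      rw [hG'edge, Finset.card_erase_of_mem hxymem, hn]
    have hn1 : 1 ≤ n := by
      rw [← hn]
      exact Finset.card_pos.mpr ⟨_, hxymem⟩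
    have := ih (n - 1) (by omega) G' hcard' hG'conn
    constructor
    · omega
    · intro h; omega

lemma connected_card_iff_tree' {W : Type*} [Fintype W] (G : SimpleGraph W) [Fintype G.edgeSet]
    (hconn : G.Connected) :
    Fintype.card W ≤ G.edgeFinset.card + 1 ∧
    (Fintype.card W = G.edgeFinset.card + 1 ↔ G.IsTree) := by
  obtain ⟨h1, h2⟩ := connected_bound' G.edgeFinset.card G rfl hconn
  refine ⟨h1, ⟨fun h => ⟨hconn, h2 h⟩, fun ht => ?_⟩⟩
  have := ht.card_edgeFinset; omega

lemma induce_two_mul_card' {V : Type*} [Fintype V] [DecidableEq V] (G : SimpleGraph V)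
    [DecidableRel G.Adj] (U : Finset V) :
    2 * (G.induce (↑U : Set V)).edgeFinset.card =
      ((U ×ˢ U).filter fun p => G.Adj p.1 p.2).card := by
  classical
  rw [SimpleGraph.two_mul_card_edgeFinset]
  apply Finset.card_bij (fun p _ => ((p.1 : V), (p.2 : V)))
  · rintro ⟨a, b⟩ hp
    simp only [Finset.mem_filter, Finset.mem_univ, true_and] at hp
    simp only [Finset.mem_filter, Finset.mem_product]
    exact ⟨⟨by exact_mod_cast a.2, by exact_mod_cast b.2⟩, by simpa using hp⟩
  · rintro ⟨a, b⟩ _ ⟨a', b'⟩ _ h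
    simp only [Prod.mk.injEq] at h
    ext <;> simp [Subtype.ext h.1, Subtype.ext h.2]
  · rintro ⟨x, y⟩ hp
    simp only [Finset.mem_filter, Finset.mem_product] at hp
    exact ⟨(⟨x, by exact_mod_cast hp.1.1⟩, ⟨y, by exact_mod_cast hp.1.2⟩),
      by simpa using hp.2, rfl⟩

lemma pair_filter_split' {V : Type*} [Fintype V] [DecidableEq V] (G : SimpleGraph V)
    [DecidableRel G.Adj] (A B : Finset V) (hd : Disjoint A B)
    (hA : ∀ x ∈ A, ∀ y ∈ A, ¬G.Adj x y) (hB : ∀ x ∈ B, ∀ y ∈ B, ¬G.Adj x y) :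
    (((A ∪ B) ×ˢ (A ∪ B)).filter fun p => G.Adj p.1 p.2).card
      = 2 * ((A ×ˢ B).filter fun p => G.Adj p.1 p.2).card := by
  have hsplit : ((A ∪ B) ×ˢ (A ∪ B)).filter (fun p => G.Adj p.1 p.2)
      = ((A ×ˢ B).filter fun p => G.Adj p.1 p.2) ∪ ((B ×ˢ A).filter fun p => G.Adj p.1 p.2) := by
    ext ⟨x, y⟩
    simp only [Finset.mem_filter, Finset.mem_product, Finset.mem_union]
    constructor
    · rintro ⟨⟨hx, hy⟩, hadj⟩
      rcases hx with hx | hx <;> rcases hy with hy | hy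
      · exact absurd hadj (hA x hx y hy)
      · exact Or.inl ⟨⟨hx, hy⟩, hadj⟩
      · exact Or.inr ⟨⟨hx, hy⟩, hadj⟩
      · exact absurd hadj (hB x hx y hy)
    · rintro (⟨⟨hx, hy⟩, hadj⟩ | ⟨⟨hx, hy⟩, hadj⟩) <;> exact ⟨⟨by tauto, by tauto⟩, hadj⟩
  have hdisj : Disjoint ((A ×ˢ B).filter fun p => G.Adj p.1 p.2)
      ((B ×ˢ A).filter fun p => G.Adj p.1 p.2) := by
    rw [Finset.disjoint_left]
    rintro ⟨x, y⟩ h1 h2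
    simp only [Finset.mem_filter, Finset.mem_product] at h1 h2
    exact (Finset.disjoint_left.mp hd h1.1.1) h2.1.1
  have hswap : ((B ×ˢ A).filter fun p => G.Adj p.1 p.2).card
      = ((A ×ˢ B).filter fun p => G.Adj p.1 p.2).card := by
    apply Finset.card_bij (fun p _ => (p.2, p.1))
    · rintro ⟨x, y⟩ hp
      simp only [Finset.mem_filter, Finset.mem_product] at hp ⊢
      exact ⟨⟨hp.1.2, hp.1.1⟩, hp.2.symm⟩
    · rintro ⟨a, b⟩ _ ⟨a', b'⟩ _ h
      simp only [Prod.mk.injEq] at h ⊢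
      exact ⟨h.2, h.1⟩
    · rintro ⟨x, y⟩ hp
      simp only [Finset.mem_filter, Finset.mem_product] at hp
      exact ⟨(y, x), by simp [hp.1.1, hp.1.2, hp.2.symm], rfl⟩
  rw [hsplit, Finset.card_union_of_disjoint hdisj, hswap, two_mul]

/-- a graph with a Kempe-coloring of size `k` has at least
`(k−1)·|V| − C(k,2)` edges, with equality iff any two classes induce a tree. -/
theorem kempe_edge_bound {V : Type*} [Fintype V] [DecidableEq V]
    (G : SimpleGraph V) [DecidableRel G.Adj] (c : Finset (Finset V)) (k : ℕ)
    (hk : IsKempe G c) (hcard : c.card = k) :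
    (k - 1) * Fintype.card V ≤ G.edgeFinset.card + k.choose 2 ∧
    ((k - 1) * Fintype.card V = G.edgeFinset.card + k.choose 2 ↔
      ∀ A ∈ c, ∀ B ∈ c, A ≠ B → (G.induce (↑(A ∪ B) : Set V)).IsTree) := by
  classical
  obtain ⟨⟨hne, hdisj, hcov, hanti⟩, hconn⟩ := hk
  choose cl hcl1 hcl2 using hcov
  have huniq : ∀ A ∈ c, ∀ v ∈ A, cl v = A := by
    intro A hA v hv
    by_contra hne'
    exact (Finset.disjoint_left.mp (hdisj _ (hcl1 v) _ hA hne') (hcl2 v)) hv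
  set n := Fintype.card V with hn
  -- sum of class sizes is n
  have hsum : ∑ A ∈ c, A.card = n := by
    rw [hn, ← Finset.card_univ,
      Finset.card_eq_sum_card_fiberwise (f := cl) (t := c) (fun v _ => hcl1 v)]
    apply Finset.sum_congr rfl
    intro A hA
    congr 1
    ext v
    simp only [Finset.mem_filter, Finset.mem_univ, true_and]
    constructor
    · exact huniq A hA v
    · rintro rfl; exact hcl2 v
  -- the cross-edge count
  set d : Finset V × Finset V → ℕ :=
    fun p => ((p.1 ×ˢ p.2).filter fun q => G.Adj q.1 q.2).card with hd
  -- per-pair facts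
  have key : ∀ p ∈ c.offDiag,
      (p.1.card + p.2.card ≤ d p + 1 ∧
        (p.1.card + p.2.card = d p + 1 ↔ (G.induce (↑(p.1 ∪ p.2) : Set V)).IsTree)) := by
    rintro ⟨A, B⟩ hp
    rw [Finset.mem_offDiag] at hp
    obtain ⟨hA, hB, hAB⟩ := hp
    have hdAB : Disjoint A B := hdisj A hA B hB hAB
    have hUcard : Fintype.card ↥(↑(A ∪ B) : Set V) = A.card + B.card := by
      simp [Finset.card_union_of_disjoint hdAB]
    have he : (G.induce (↑(A ∪ B) : Set V)).edgeFinset.card = d (A, B) := by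
      have h1 := induce_two_mul_card' G (A ∪ B)
      rw [pair_filter_split' G A B hdAB (hanti A hA) (hanti B hB)] at h1
      have h2 : d (A, B) = ((A ×ˢ B).filter fun q => G.Adj q.1 q.2).card := by
        simp only [hd]
      omega
    have hHconn : (G.induce (↑(A ∪ B) : Set V)).Connected := hconn A hA B hB hAB
    obtain ⟨h1, h2⟩ := connected_card_iff_tree' _ hHconn
    rw [hUcard, he] at h1 h2
    exact ⟨h1, h2⟩
  -- global edge count
  have hglobal : ∑ p ∈ c.offDiag, d p = 2 * G.edgeFinset.card := by
    rw [SimpleGraph.two_mul_card_edgeFinset,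
      Finset.card_eq_sum_card_fiberwise (f := fun p => (cl p.1, cl p.2)) (t := c.offDiag)]
    · apply Finset.sum_congr rfl
      rintro ⟨A, B⟩ hp
      rw [Finset.mem_offDiag] at hp
      obtain ⟨hA, hB, hAB⟩ := hp
      simp only [hd]
      congr 1
      ext ⟨x, y⟩
      simp only [Finset.mem_filter, Finset.mem_product, Finset.mem_univ, true_and,
        Prod.mk.injEq]
      constructor
      · rintro ⟨⟨hx, hy⟩, hadj⟩
        exact ⟨hadj, huniq A hA x hx, huniq B hB y hy⟩
      · rintro ⟨hadj, rfl, rfl⟩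
        exact ⟨⟨hcl2 x, hcl2 y⟩, hadj⟩
    · rintro ⟨x, y⟩ hp
      simp only [Finset.mem_coe, Finset.mem_filter, Finset.mem_univ, true_and] at hp
      rw [Finset.mem_coe, Finset.mem_offDiag]
      refine ⟨hcl1 x, hcl1 y, ?_⟩
      intro hEq
      simp only [Prod.mk.injEq] at hEq
      have hx : x ∈ cl y := hEq ▸ hcl2 x
      exact hanti (cl y) (hcl1 y) x hx y (hcl2 y) hp
  -- sum of sizes over offDiag
  have hsum1 : ∑ p ∈ c.offDiag, (p.1.card + p.2.card) = 2 * ((k - 1) * n) := by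
    have hprod : ∑ p ∈ c ×ˢ c, (p.1.card + p.2.card) = 2 * (k * n) := by
      rw [Finset.sum_product]
      have : ∀ A ∈ c, ∑ B ∈ c, (A.card + B.card) = k * A.card + n := by
        intro A _
        rw [Finset.sum_add_distrib, Finset.sum_const, hsum, hcard, smul_eq_mul]
      rw [Finset.sum_congr rfl this, Finset.sum_add_distrib, Finset.sum_const, hcard,
        smul_eq_mul, ← Finset.mul_sum, hsum]
      ring
    have hdiag : ∑ p ∈ c.diag, (p.1.card + p.2.card) = 2 * n := by
      have : ∑ p ∈ c.diag, (p.1.card + p.2.card) = ∑ A ∈ c, (A.card + A.card) := by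
        apply Finset.sum_bij (fun p _ => p.1)
        · rintro ⟨A, B⟩ hp
          rw [Finset.mem_diag] at hp
          exact hp.1
        · rintro ⟨A, B⟩ hp ⟨A', B'⟩ hp' h
          rw [Finset.mem_diag] at hp hp'
          obtain ⟨-, h2⟩ := hp
          obtain ⟨-, h2'⟩ := hp'
          dsimp only at h h2 h2'
          subst h2
          subst h2'
          rw [h]
        · intro A hA
          exact ⟨(A, A), Finset.mem_diag.mpr ⟨hA, rfl⟩, rfl⟩
        · rintro ⟨A, B⟩ hp
          rw [Finset.mem_diag] at hp
          obtain ⟨-, h2⟩ := hp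
          dsimp only at h2 ⊢
          subst h2
          rfl
      rw [this]
      simp_rw [← two_mul]
      rw [← Finset.mul_sum, hsum]
    have hu : ∑ p ∈ c.diag, (p.1.card + p.2.card) + ∑ p ∈ c.offDiag, (p.1.card + p.2.card)
        = ∑ p ∈ c ×ˢ c, (p.1.card + p.2.card) := by
      rw [← Finset.sum_union (Finset.disjoint_diag_offDiag _), Finset.diag_union_offDiag]
    rcases k with _ | m
    · have hc0 : c = ∅ := Finset.card_eq_zero.mp hcard
      rw [hc0]
      simp
    · have h1 : (m + 1) * n = m * n + n := by ring
      have h2 : (m + 1 - 1) * n = m * n := by simp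
      rw [h2]
      omega
  -- sum of d + 1 over offDiag
  have hsum2 : ∑ p ∈ c.offDiag, (d p + 1) = 2 * G.edgeFinset.card + 2 * k.choose 2 := by
    have hch : 2 * k.choose 2 = k * k - k := by
      rcases k with _ | m
      · simp
      · have h2 : 2 ∣ (m + 1) * m := by
          rw [mul_comm]
          exact (Nat.even_mul_succ_self m).two_dvd
        rw [Nat.choose_two_right, Nat.succ_sub_one, Nat.mul_div_cancel' h2]
        have hm : (m + 1) * (m + 1) = (m + 1) * m + (m + 1) := by ring
        omega
    rw [Finset.sum_add_distrib, hglobal, Finset.sum_const, smul_eq_mul, mul_one,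
      Finset.offDiag_card, hcard, hch]
  have hle : ∑ p ∈ c.offDiag, (p.1.card + p.2.card) ≤ ∑ p ∈ c.offDiag, (d p + 1) :=
    Finset.sum_le_sum fun p hp => (key p hp).1
  constructor
  · rw [hsum1, hsum2] at hle
    omega
  · constructor
    · intro hEq
      have hEq2 : ∑ p ∈ c.offDiag, (p.1.card + p.2.card) = ∑ p ∈ c.offDiag, (d p + 1) := by
        rw [hsum1, hsum2]
        omega
      have := (Finset.sum_eq_sum_iff_of_le fun p hp => (key p hp).1).mp hEq2
      intro A hA B hB hAB
      exact ((key ⟨A, B⟩ (Finset.mem_offDiag.mpr ⟨hA, hB, hAB⟩)).2).mp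
        (this ⟨A, B⟩ (Finset.mem_offDiag.mpr ⟨hA, hB, hAB⟩))
    · intro htree
      have hEq2 : ∑ p ∈ c.offDiag, (p.1.card + p.2.card) = ∑ p ∈ c.offDiag, (d p + 1) := by
        apply Finset.sum_congr rfl
        rintro ⟨A, B⟩ hp
        have hp' := Finset.mem_offDiag.mp hp
        exact ((key ⟨A, B⟩ hp).2).mpr (htree A hp'.1 B hp'.2.1 hp'.2.2)
      rw [hsum1, hsum2] at hEq2
      omega
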